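/- Let I be a square-free monomial ideal of R = k[x_1,...,x_n] such that d = min{deg(u) : u ∈ G(I)} ≥ 2, where G(I) is the minimal monomial generating set of I. Then the arithmetical rank of I satisfies ara(I) ≤ n − d + 1. -/

import Mathlib

open MvPolynomial

namespace PaperDefs

variable {k : Type*} [Field k] {n : ℕ}

/-- The total degree of an exponent vector. -/
def edeg (a : Fin n →₀ ℕ) : ℕ := ∑ i, a i

/-- `I` is a monomial ideal: it is generated by a set of monomials. -/
def IsMonomialIdeal (I : Ideal (MvPolynomial (Fin n) k)) : Prop :=
  ∃ S : Set (Fin n →₀ ℕ),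
    I = Ideal.span ((fun a => (MvPolynomial.monomial a (1 : k))) '' S)

/-- The (exponent vectors of the) unique minimal monomial generating set `G(I)`:
monomials of `I` that are minimal with respect to divisibility. -/
def minGens (I : Ideal (MvPolynomial (Fin n) k)) : Set (Fin n →₀ ℕ) :=
  {a | (MvPolynomial.monomial a (1 : k)) ∈ I ∧
    ∀ b : Fin n →₀ ℕ, b < a → (MvPolynomial.monomial b (1 : k)) ∉ I}

/-- A squarefree exponent vector. -/
def SqFree (a : Fin n →₀ ℕ) : Prop := ∀ i, a i ≤ 1

/-- `I` is a polymatroidal ideal of degree `d`. -/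
def IsPolymatroidal (I : Ideal (MvPolynomial (Fin n) k)) (d : ℕ) : Prop :=
  IsMonomialIdeal I ∧ I ≠ ⊥ ∧
  (∀ a ∈ minGens I, edeg a = d) ∧
  ∀ a ∈ minGens I, ∀ b ∈ minGens I, ∀ i : Fin n, b i < a i →
    ∃ j : Fin n, a j < b j ∧
      (MvPolynomial.monomial (a - Finsupp.single i 1 + Finsupp.single j 1) (1 : k)) ∈ I

/-- `I` is a matroidal ideal of degree `d`: a squarefree polymatroidal ideal. -/
def IsMatroidal (I : Ideal (MvPolynomial (Fin n) k)) (d : ℕ) : Prop :=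
  IsPolymatroidal I d ∧ ∀ a ∈ minGens I, SqFree a

/-- `I` is full-supported: every variable divides some minimal generator. -/
def FullSupported (I : Ideal (MvPolynomial (Fin n) k)) : Prop :=
  ∀ i : Fin n, ∃ a ∈ minGens I, a i ≠ 0

/-- The maximal graded ideal `(x_1, ..., x_n)`. -/
noncomputable def varIdeal (k : Type*) [Field k] (n : ℕ) : Ideal (MvPolynomial (Fin n) k) :=
  Ideal.span (Set.range MvPolynomial.X)

/-- The colon ideal `(I : x_i)`. -/
noncomputable def colonVar (I : Ideal (MvPolynomial (Fin n) k)) (i : Fin n) :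
    Ideal (MvPolynomial (Fin n) k) :=
  I.colon ((Ideal.span {MvPolynomial.X i} : Ideal (MvPolynomial (Fin n) k)) : Set (MvPolynomial (Fin n) k))

/-- The height of an ideal: the infimum of `Order.height` over the primes containing it. -/
noncomputable def ht {R : Type*} [CommRing R] (I : Ideal R) : ℕ∞ :=
  ⨅ (p : PrimeSpectrum R) (_ : I ≤ p.asIdeal), Order.height p

/-- `I` is unmixed: all associated primes of `R/I` have the same height. -/
def IsUnmixed (I : Ideal (MvPolynomial (Fin n) k)) : Prop :=
  ∀ p ∈ associatedPrimes (MvPolynomial (Fin n) k) (MvPolynomial (Fin n) k ⧸ I),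
    ∀ q ∈ associatedPrimes (MvPolynomial (Fin n) k) (MvPolynomial (Fin n) k ⧸ I),
      ht p = ht q

/-- The arithmetical rank of `I`. -/
noncomputable def ara (I : Ideal (MvPolynomial (Fin n) k)) : ℕ :=
  sInf {t : ℕ | ∃ f : Fin t → MvPolynomial (Fin n) k,
    (Ideal.span (Set.range f)).radical = I.radical}

/-- The squarefree Veronese ideal of degree `d`. -/
noncomputable def sqfreeVeronese (k : Type*) [Field k] (n d : ℕ) : Ideal (MvPolynomial (Fin n) k) :=
  Ideal.span ((fun s : Finset (Fin n) => ∏ i ∈ s, MvPolynomial.X i) ''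
    {s : Finset (Fin n) | s.card = d})

/-- The depth of `R/I` : the supremum of lengths of `R/I`-regular sequences consisting of
elements of the maximal graded ideal. -/
noncomputable def quotDepth (I : Ideal (MvPolynomial (Fin n) k)) : ℕ :=
  sSup {r : ℕ | ∃ rs : List (MvPolynomial (Fin n) k), rs.length = r ∧
    (∀ x ∈ rs, x ∈ varIdeal k n) ∧
    RingTheory.Sequence.IsRegular (MvPolynomial (Fin n) k ⧸ I) rs}

/-- `R/I` is Cohen–Macaulay: the depth of `R/I` equals its Krull dimension. -/
def IsCohenMacaulayQuot (I : Ideal (MvPolynomial (Fin n) k)) : Prop :=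
  (quotDepth I : WithBot ℕ∞) = ringKrullDim (MvPolynomial (Fin n) k ⧸ I)

end PaperDefs


section Statement11Aux

open PaperDefs

variable {k : Type*} [Field k] {n : ℕ}

private lemma st11_exists_minGen (I : Ideal (MvPolynomial (Fin n) k)) :
    ∀ N (a : Fin n →₀ ℕ), edeg a ≤ N → (monomial a (1 : k)) ∈ I →
      ∃ c ∈ minGens I, c ≤ a := by
  intro N
  induction N using Nat.strong_induction_on with
  | _ N IH =>
    intro a haN ha
    by_cases hmin : ∀ b : Fin n →₀ ℕ, b < a → (monomial b (1 : k)) ∉ I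
    · exact ⟨a, ⟨ha, hmin⟩, le_refl a⟩
    · push_neg at hmin
      obtain ⟨b, hba, hbI⟩ := hmin
      have hlt : edeg b < edeg a := by
        refine Finset.sum_lt_sum (fun i _ => Finsupp.le_def.mp hba.le i) ?_
        by_contra hc
        push_neg at hc
        exact absurd (Finsupp.le_def.mpr fun i => hc i (Finset.mem_univ i)) hba.not_ge
      obtain ⟨c, hc, hcb⟩ := IH (edeg b) (lt_of_lt_of_le hlt haN) b le_rfl hbI
      exact ⟨c, hc, hcb.trans hba.le⟩

open Classical in
/-- The Schmitt–Vogel sums: sum of all squarefree monomials of degree `n - i`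
lying in the radical of `I`. -/
private noncomputable def svQ (I : Ideal (MvPolynomial (Fin n) k)) (i : ℕ) :
    MvPolynomial (Fin n) k :=
  ∑ s ∈ Finset.univ.filter (fun s : Finset (Fin n) =>
      s.card = n - i ∧ (∏ j ∈ s, X j) ∈ I.radical), ∏ j ∈ s, X j

private lemma st11_sq_mem_radical {J : Ideal (MvPolynomial (Fin n) k)}
    {x : MvPolynomial (Fin n) k} (h : x ^ 2 ∈ J.radical) : x ∈ J.radical := by
  have h2 : x ∈ J.radical.radical := Ideal.mem_radical_of_pow_mem (J.radical_idem ▸ h)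
  rwa [Ideal.radical_idem] at h2

private lemma st11_claimA (I : Ideal (MvPolynomial (Fin n) k)) {d : ℕ}
    (J : Ideal (MvPolynomial (Fin n) k))
    (hqJ : ∀ i : ℕ, i ≤ n - d → svQ I i ∈ J) :
    ∀ N, ∀ s : Finset (Fin n), n - s.card = N → (∏ j ∈ s, (X j : MvPolynomial (Fin n) k)) ∈ I.radical →
      d ≤ s.card → (∏ j ∈ s, (X j : MvPolynomial (Fin n) k)) ∈ J.radical := by
  classical
  intro N
  induction N using Nat.strong_induction_on with
  | _ N IH =>
    intro s hN hs hds
    have hcardn : ∀ t : Finset (Fin n), t.card ≤ n := fun t => by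
      simpa using Finset.card_le_univ t
    set F : Finset (Finset (Fin n)) := Finset.univ.filter (fun t : Finset (Fin n) =>
      t.card = n - (n - s.card) ∧ (∏ j ∈ t, (X j : MvPolynomial (Fin n) k)) ∈ I.radical) with hF
    have hsF : s ∈ F := by
      rw [hF, Finset.mem_filter]
      refine ⟨Finset.mem_univ s, ?_, hs⟩
      have := hcardn s; omega
    have hq : svQ I (n - s.card) = ∑ t ∈ F, ∏ j ∈ t, (X j : MvPolynomial (Fin n) k) := by
      rw [svQ, hF]
    have key : (∏ j ∈ s, (X j : MvPolynomial (Fin n) k)) ^ 2 =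
        (∏ j ∈ s, (X j : MvPolynomial (Fin n) k)) * svQ I (n - s.card)
        - ∑ t ∈ F.erase s, (∏ j ∈ s, (X j : MvPolynomial (Fin n) k)) * ∏ j ∈ t, X j := by
      rw [hq, Finset.mul_sum, ← Finset.add_sum_erase _ _ hsF]
      ring
    have hcross : ∀ t ∈ F.erase s,
        (∏ j ∈ s, (X j : MvPolynomial (Fin n) k)) * ∏ j ∈ t, X j ∈ J.radical := by
      intro t ht
      obtain ⟨hts, htF⟩ := Finset.mem_erase.mp ht
      rw [hF, Finset.mem_filter] at htF
      obtain ⟨_, htcard, htI⟩ := htF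
      have htc : t.card = s.card := by have := hcardn s; omega
      have hlt : s.card < (s ∪ t).card := by
        rcases lt_or_eq_of_le (Finset.card_le_card (Finset.subset_union_left (s₂ := t)))
          with h | h
        · exact h
        · exfalso
          have hsu : s = s ∪ t :=
            Finset.eq_of_subset_of_card_le Finset.subset_union_left (le_of_eq h.symm)
          have hts' : t ⊆ s := by rw [hsu]; exact Finset.subset_union_right
          exact hts (Finset.eq_of_subset_of_card_le hts' (le_of_eq htc.symm))
      have hunion_rad : (∏ j ∈ s ∪ t, (X j : MvPolynomial (Fin n) k)) ∈ I.radical := by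
        obtain ⟨c, hc⟩ := Finset.prod_dvd_prod_of_subset s (s ∪ t)
          (fun j => (X j : MvPolynomial (Fin n) k)) Finset.subset_union_left
        rw [hc]
        exact Ideal.mul_mem_right _ _ hs
      have hmeas : n - (s ∪ t).card < N := by
        have := hcardn (s ∪ t); omega
      have hun : (∏ j ∈ s ∪ t, (X j : MvPolynomial (Fin n) k)) ∈ J.radical :=
        IH _ hmeas (s ∪ t) rfl hunion_rad (le_trans hds hlt.le)
      have hpu : (∏ j ∈ s, (X j : MvPolynomial (Fin n) k)) * ∏ j ∈ t, X j =
          (∏ j ∈ s ∪ t, (X j : MvPolynomial (Fin n) k)) * ∏ j ∈ s ∩ t, X j :=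
        Finset.prod_union_inter.symm
      rw [hpu]
      exact Ideal.mul_mem_right _ _ hun
    have hsq : (∏ j ∈ s, (X j : MvPolynomial (Fin n) k)) ^ 2 ∈ J.radical := by
      rw [key]
      refine Ideal.sub_mem _ ?_ (Ideal.sum_mem _ hcross)
      refine Ideal.mul_mem_left _ _ (Ideal.le_radical (hqJ _ ?_))
      omega
    exact st11_sq_mem_radical hsq

end Statement11Aux

open PaperDefs in
/-- Lemma 2.2. Let `I` be a squarefree monomial ideal with
`d = min{deg u : u ∈ G(I)} ≥ 2`. Then `ara(I) ≤ n - d + 1`. -/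
theorem statement11 {k : Type*} [Field k] {n d : ℕ}
    (I : Ideal (MvPolynomial (Fin n) k))
    (hmono : IsMonomialIdeal I) (hsf : ∀ a ∈ minGens I, SqFree a)
    (hd2 : 2 ≤ d)
    (hdle : ∀ a ∈ minGens I, d ≤ edeg a)
    (hdeq : ∃ a ∈ minGens I, edeg a = d) :
    ara I ≤ n - d + 1 := by
  classical
  set f : Fin (n - d + 1) → MvPolynomial (Fin n) k := fun i => svQ I i with hf
  set J : Ideal (MvPolynomial (Fin n) k) := Ideal.span (Set.range f) with hJ
  have hqJ : ∀ i : ℕ, i ≤ n - d → svQ I i ∈ J := fun i hi =>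
    Ideal.subset_span ⟨⟨i, by omega⟩, rfl⟩
  obtain ⟨S, hI⟩ := hmono
  have hIrad : I.radical ≤ J.radical := by
    have hIJ : I ≤ J.radical := by
      conv_lhs => rw [hI]
      rw [Ideal.span_le]
      rintro _ ⟨a, haS, rfl⟩
      have haI : (monomial a (1 : k)) ∈ I := by
        rw [hI]; exact Ideal.subset_span ⟨a, haS, rfl⟩
      obtain ⟨c, hcmin, hca⟩ := st11_exists_minGen I (edeg a) a le_rfl haI
      have hcsf := hsf c hcmin
      have hcd := hdle c hcmin
      have hsupp : c.support ⊆ a.support := by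
        intro i hi
        rw [Finsupp.mem_support_iff] at hi ⊢
        intro h
        exact hi (Nat.le_zero.mp (h ▸ Finsupp.le_def.mp hca i))
      have hcardd : d ≤ a.support.card := by
        have h1 : edeg c = c.support.card := by
          have h2 : edeg c = ∑ i ∈ c.support, c i :=
            (Finset.sum_subset (Finset.subset_univ _)
              (fun i _ hi => Finsupp.notMem_support_iff.mp hi)).symm
          rw [h2, Finset.card_eq_sum_ones]
          refine Finset.sum_congr rfl fun i hi => ?_
          have h3 := hcsf i
          have h4 := Finsupp.mem_support_iff.mp hi
          omega
        calc d ≤ edeg c := hcd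
          _ = c.support.card := h1
          _ ≤ a.support.card := Finset.card_le_card hsupp
      have hma : monomial a (1 : k) = ∏ i ∈ a.support, X i ^ a i := by
        rw [monomial_eq]; simp [Finsupp.prod]
      have hmrad : (∏ i ∈ a.support, (X i : MvPolynomial (Fin n) k)) ∈ I.radical := by
        refine Ideal.mem_radical_of_pow_mem (m := edeg a) (Ideal.le_radical ?_)
        have hpow : (∏ i ∈ a.support, (X i : MvPolynomial (Fin n) k)) ^ (edeg a) =
            monomial a 1 * ∏ i ∈ a.support, X i ^ (edeg a - a i) := by
          rw [hma, ← Finset.prod_mul_distrib, ← Finset.prod_pow]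
          refine Finset.prod_congr rfl fun i hi => ?_
          rw [← pow_add]
          congr 1
          have h5 : a i ≤ edeg a :=
            Finset.single_le_sum (f := fun i => a i) (fun j _ => Nat.zero_le _)
              (Finset.mem_univ i)
          omega
        rw [hpow]
        exact Ideal.mul_mem_right _ _ haI
      have hmJ : (∏ i ∈ a.support, (X i : MvPolynomial (Fin n) k)) ∈ J.radical :=
        st11_claimA I J hqJ (n - a.support.card) a.support rfl hmrad hcardd
      have hsplit : monomial a (1 : k) =
          (∏ i ∈ a.support, X i) * ∏ i ∈ a.support, X i ^ (a i - 1) := by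
        rw [hma, ← Finset.prod_mul_distrib]
        refine Finset.prod_congr rfl fun i hi => ?_
        have h6 := Finsupp.mem_support_iff.mp hi
        rw [← pow_succ']
        congr 1
        omega
      show (monomial a (1 : k)) ∈ J.radical
      rw [hsplit]
      exact Ideal.mul_mem_right _ _ hmJ
    have h7 := Ideal.radical_mono hIJ
    rwa [Ideal.radical_idem] at h7
  have hJrad : J.radical ≤ I.radical := by
    have hJI : J ≤ I.radical := by
      rw [hJ, Ideal.span_le]
      rintro _ ⟨i, rfl⟩
      rw [hf]
      refine Ideal.sum_mem _ fun s hsF => ?_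
      rw [Finset.mem_filter] at hsF
      exact hsF.2.2
    have h8 := Ideal.radical_mono hJI
    rwa [Ideal.radical_idem] at h8
  exact Nat.sInf_le ⟨f, le_antisymm hJrad hIrad⟩
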